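/- Commutator trees as disjunctions: let V be a finite type, T a commutator tree over words h₁, …, h_m ∈ FreeGroup V whose leaves solve specifications g₁, …, g_m on V, and let f = g₁ ∨ ⋯ ∨ g_m (pointwise disjunction, itself a specification). Then: (i) for every S : Finset V with f S, the value of T satisfies kill_S (value T) = 1; and (ii) the value of T solves f if and only if for every S : Finset V with ¬f S and every internal node (non-leaf subtree) T' of T, kill_S (value T') ≠ 1. -/

import Mathlib

/-- The removal homomorphism: kills the generators with index in `S`. -/
def kill {V : Type*} [DecidableEq V] (S : Finset V) : FreeGroup V →* FreeGroup V :=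
  FreeGroup.lift fun i => if i ∈ S then 1 else FreeGroup.of i

/-- `f` is a specification on `V`: a monotone predicate on removal sets that holds
when all nails are removed. -/
def IsSpec {V : Type*} [Fintype V] (f : Finset V → Prop) : Prop :=
  (∀ S S' : Finset V, S ⊆ S' → f S → f S') ∧ f Finset.univ

/-- A commutator tree: a full binary tree whose leaves are labelled by words of the
free group on `V`. -/
inductive CommTree (V : Type*) : Type _ where
  | leaf : FreeGroup V → CommTree V
  | node : CommTree V → CommTree V → CommTree V

namespace CommTree

open scoped commutatorElement in
/-- The value of a commutator tree: a leaf evaluates to its label, an internal node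
to the commutator of the values of its two children. -/
def value {V : Type*} : CommTree V → FreeGroup V
  | leaf h => h
  | node a b => ⁅a.value, b.value⁆

/-- The list of leaf labels, in left-to-right order. -/
def leaves {V : Type*} : CommTree V → List (FreeGroup V)
  | leaf h => [h]
  | node a b => a.leaves ++ b.leaves

/-- The list of all internal nodes (non-leaf subtrees) of a commutator tree. -/
def internalNodes {V : Type*} : CommTree V → List (CommTree V)
  | leaf _ => []
  | node a b => node a b :: (a.internalNodes ++ b.internalNodes)

end CommTree

lemma forall₂_exists_left {α β : Type*} {R : α → β → Prop} {l₁ : List α} {l₂ : List β}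
    (h : List.Forall₂ R l₁ l₂) {b : β} (hb : b ∈ l₂) : ∃ a ∈ l₁, R a b := by
  induction h with
  | nil => simp at hb
  | cons hr _ ih =>
    rcases List.mem_cons.mp hb with rfl | hb
    · exact ⟨_, List.mem_cons_self, hr⟩
    · obtain ⟨a, ha, har⟩ := ih hb
      exact ⟨a, List.mem_cons_of_mem _ ha, har⟩

lemma kill_value_of_leaf {V : Type*} [DecidableEq V] (S : Finset V) (T : CommTree V)
    (h : FreeGroup V) (hh : h ∈ T.leaves) (h1 : kill S h = 1) : kill S T.value = 1 := by
  induction T with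
  | leaf w => simp [CommTree.leaves] at hh; simpa [CommTree.value, hh] using h1
  | node a b iha ihb =>
    simp only [CommTree.leaves, List.mem_append] at hh
    have : kill S a.value = 1 ∨ kill S b.value = 1 := hh.imp iha ihb
    rcases this with h' | h' <;>
      simp [CommTree.value, map_commutatorElement, h', commutatorElement_def]

lemma kill_value_of_internal {V : Type*} [DecidableEq V] (S : Finset V) (T T' : CommTree V)
    (hT' : T' ∈ T.internalNodes) (h1 : kill S T'.value = 1) : kill S T.value = 1 := by
  induction T with
  | leaf w => simp [CommTree.internalNodes] at hT'
  | node a b iha ihb =>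
    simp only [CommTree.internalNodes, List.mem_cons, List.mem_append] at hT'
    rcases hT' with rfl | hT' | hT'
    · exact h1
    · simp [CommTree.value, map_commutatorElement, iha hT', commutatorElement_def]
    · simp [CommTree.value, map_commutatorElement, ihb hT', commutatorElement_def]

theorem commutator_trees_as_disjunctions {V : Type*} [Fintype V] [DecidableEq V]
    (T : CommTree V) (gs : List (Finset V → Prop))
    (hspec : ∀ g ∈ gs, IsSpec g)
    (hleaves : List.Forall₂ (fun h g => ∀ S : Finset V, kill S h = 1 ↔ g S)
      T.leaves gs) :
    (∀ S : Finset V, (∃ g ∈ gs, g S) → kill S T.value = 1) ∧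
    ((∀ S : Finset V, kill S T.value = 1 ↔ ∃ g ∈ gs, g S) ↔
      ∀ S : Finset V, ¬(∃ g ∈ gs, g S) →
        ∀ T' ∈ T.internalNodes, kill S T'.value ≠ 1) := by
  have part1 : ∀ S : Finset V, (∃ g ∈ gs, g S) → kill S T.value = 1 := by
    rintro S ⟨g, hg, hgS⟩
    obtain ⟨h, hh, hR⟩ := forall₂_exists_left hleaves hg
    exact kill_value_of_leaf S T h hh ((hR S).mpr hgS)
  refine ⟨part1, ⟨fun hsolve S hnf T' hT' h1 => ?_, fun hcond S => ?_⟩⟩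
  · exact hnf ((hsolve S).mp (kill_value_of_internal S T T' hT' h1))
  · constructor
    · intro h1
      by_contra hnf
      cases T with
      | leaf h =>
        cases hleaves with
        | cons hR htail =>
          cases htail
          exact hnf ⟨_, List.mem_cons_self, (hR S).mp h1⟩
      | node a b =>
        exact hcond S hnf _ (List.mem_cons_self) h1
    · exact part1 S
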